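/- arXiv:1811.01670 — 5 statements merged into one kernel-verified Lean document; each statement's English description precedes it below -/
import Mathlib

section
/- Let A be a type of memory-block addresses, a : A a distinguished block, N a positive associativity, and consider a-focused cache states and the transition and downward-closure-step relations as defined. For every finite sequence of blocks b_0, …, b_n all different from a and all a-focused states u_0 and u_{n+1}, the following are equivalent: (1) there exist a-focused states v_0, …, v_n and u_1, …, u_n such that u_i →b_i v_i and v_i →↓ u_{i+1} for all 0 ≤ i ≤ n; (2) there exist a-focused states u'_1, …, u'_{n+1} such that u_0 →b_0 u'_1, u'_i →b_i u'_{i+1} for all 1 ≤ i ≤ n, and u'_{n+1} →↓ u_{n+1}. -/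
/-- The `a`-focused cache transition relation for an access to block `b` in an
LRU cache of associativity `N`: `none` (written 𝒜) means `a` is not in the cache,
`some x` means exactly the blocks in `x` are younger than `a`. -/
inductive FStep {A : Type*} [DecidableEq A] (N : ℕ) (b : A) :
    Option (Finset A) → Option (Finset A) → Prop
  | miss : FStep N b none none
  | hit (x : Finset A) (h : (x ∪ {b}).card < N) : FStep N b (some x) (some (x ∪ {b}))
  | evict (x : Finset A) (h : (x ∪ {b}).card = N) : FStep N b (some x) none

/-- The downward-closure step relation on `a`-focused cache states. -/
inductive DownStep {A : Type*} : Option (Finset A) → Option (Finset A) → Prop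
  | top (y : Option (Finset A)) : DownStep none y
  | sub (x y : Finset A) (h : y ⊆ x) : DownStep (some x) (some y)

lemma downStep_refl {A : Type*} (x : Option (Finset A)) : DownStep x x := by
  cases x with
  | none => exact DownStep.top none
  | some X => exact DownStep.sub X X (subset_refl X)

lemma downStep_trans {A : Type*} {x y z : Option (Finset A)}
    (h1 : DownStep x y) (h2 : DownStep y z) : DownStep x z := by
  cases h1 with
  | top => exact DownStep.top z
  | sub X Y hYX =>
    cases h2 with
    | sub _ Z hZY => exact DownStep.sub X Z (hZY.trans hYX)

lemma fstep_small {A : Type*} [DecidableEq A] {N : ℕ} {b : A}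
    {x y : Option (Finset A)} (h : FStep N b x y) :
    ∀ Y, y = some Y → Y.card < N := by
  intro Y hY
  cases h with
  | miss => simp at hY
  | hit X h => injection hY with h'; subst h'; exact h
  | evict => simp at hY

lemma fd_comm {A : Type*} [DecidableEq A] {N : ℕ} {b : A}
    {x y z : Option (Finset A)} (hx : ∀ X, x = some X → X.card < N)
    (hd : DownStep x y) (hf : FStep N b y z) :
    ∃ w, FStep N b x w ∧ DownStep w z := by
  cases hd with
  | top y => exact ⟨none, FStep.miss, DownStep.top z⟩
  | sub X Y hYX =>
    have hX : X.card < N := hx X rfl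
    have hle : (X ∪ {b}).card ≤ N := by
      calc (X ∪ {b}).card ≤ X.card + ({b} : Finset A).card := Finset.card_union_le _ _
        _ = X.card + 1 := by simp
        _ ≤ N := hX
    cases hf with
    | hit Y hY =>
      rcases lt_or_eq_of_le hle with h | h
      · exact ⟨some (X ∪ {b}), FStep.hit X h,
          DownStep.sub _ _ (Finset.union_subset_union hYX (subset_refl _))⟩
      · exact ⟨none, FStep.evict X h, DownStep.top _⟩
    | evict Y hY =>
      have hge : N ≤ (X ∪ {b}).card := by
        rw [← hY]
        exact Finset.card_le_card (Finset.union_subset_union hYX (subset_refl _))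
      exact ⟨none, FStep.evict X (le_antisymm hle hge), DownStep.top none⟩

lemma auxChain {A : Type*} [DecidableEq A] {N : ℕ} :
    ∀ (n : ℕ) (b : ℕ → A) (u v : ℕ → Option (Finset A)),
    (∀ i ≤ n, FStep N (b i) (u i) (v i) ∧ DownStep (v i) (u (i + 1))) →
    ∃ u' : ℕ → Option (Finset A),
      FStep N (b 0) (u 0) (u' 1) ∧
      (∀ i, 1 ≤ i → i ≤ n → FStep N (b i) (u' i) (u' (i + 1))) ∧
      DownStep (u' (n + 1)) (u (n + 1)) ∧
      (∀ X, u' (n + 1) = some X → X.card < N) := by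
  intro n
  induction n with
  | zero =>
    intro b u v h
    obtain ⟨h1, h2⟩ := h 0 le_rfl
    exact ⟨fun _ => v 0, h1, by omega, h2, fstep_small h1⟩
  | succ n ih =>
    intro b u v h
    obtain ⟨u', h1, h2, h3, h4⟩ := ih b u v (fun i hi => h i (hi.trans (Nat.le_succ n)))
    obtain ⟨hf, hd⟩ := h (n + 1) le_rfl
    obtain ⟨w, hw1, hw2⟩ := fd_comm h4 h3 hf
    refine ⟨fun i => if i = n + 2 then w else u' i, ?_, ?_, ?_, ?_⟩
    · simpa using h1
    · intro i hi1 hi2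
      rcases Nat.lt_or_ge i (n + 1) with hlt | hge
      · have e1 : i ≠ n + 2 := by omega
        have e2 : i + 1 ≠ n + 2 := by omega
        simp only [if_neg e1, if_neg e2]
        exact h2 i hi1 (by omega)
      · have hi : i = n + 1 := by omega
        subst hi
        simp only [if_neg (by omega : n + 1 ≠ n + 2), if_pos rfl]
        exact hw1
    · simp only [if_pos rfl]
      exact downStep_trans hw2 hd
    · simp only [if_pos rfl]
      intro X hX
      exact fstep_small hw1 X hX

/-- Interleaving downward-closure steps with focused transitions is equivalent to
performing all focused transitions first and a single downward-closure step at the end. -/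
theorem downStep_interleave_iff {A : Type*} [DecidableEq A] (a : A) (N : ℕ) (hN : 1 ≤ N)
    (n : ℕ) (b : ℕ → A) (hb : ∀ i ≤ n, b i ≠ a)
    (u0 ufin : Option (Finset A)) :
    (∃ u v : ℕ → Option (Finset A),
        u 0 = u0 ∧ u (n + 1) = ufin ∧
        ∀ i ≤ n, FStep N (b i) (u i) (v i) ∧ DownStep (v i) (u (i + 1))) ↔
    (∃ u' : ℕ → Option (Finset A),
        FStep N (b 0) u0 (u' 1) ∧
        (∀ i, 1 ≤ i → i ≤ n → FStep N (b i) (u' i) (u' (i + 1))) ∧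
        DownStep (u' (n + 1)) ufin) := by
  constructor
  · rintro ⟨u, v, h0, hfin, h⟩
    obtain ⟨u', h1, h2, h3, _⟩ := auxChain n b u v h
    rw [h0] at h1
    rw [hfin] at h3
    exact ⟨u', h1, h2, h3⟩
  · rintro ⟨u', h1, h2, h3⟩
    refine ⟨fun i => if i = 0 then u0 else if i = n + 1 then ufin else u' i,
            fun i => u' (i + 1), by simp, by simp, ?_⟩
    intro i hi
    constructor
    · rcases Nat.eq_zero_or_pos i with rfl | hpos
      · simpa using h1
      · have e1 : i ≠ 0 := by omega
        have e2 : i ≠ n + 1 := by omega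
        simp only [if_neg e1, if_neg e2]
        exact h2 i hpos hi
    · rcases Nat.lt_or_ge i n with hlt | hge
      · have e1 : i + 1 ≠ 0 := by omega
        have e2 : i + 1 ≠ n + 1 := by omega
        simp only [if_neg e1, if_neg e2]
        exact downStep_refl _
      · have hi' : i = n := by omega
        subst hi'
        simp only [if_neg (Nat.succ_ne_zero _), if_pos rfl]
        exact h3
end

section
/- Let A be a type of memory-block addresses, a : A a distinguished block, N a positive associativity, and consider a-focused cache states and the transition and upward-closure-step relations as defined. For every finite sequence of blocks b_0, …, b_n all different from a and all a-focused states u_0 and u_{n+1}, the following are equivalent: (1) there exist a-focused states v_0, …, v_n and u_1, …, u_n such that u_i →b_i v_i and v_i →↑ u_{i+1} for all 0 ≤ i ≤ n; (2) there exist a-focused states u'_1, …, u'_{n+1} such that u_0 →b_0 u'_1, u'_i →b_i u'_{i+1} for all 1 ≤ i ≤ n, and u'_{n+1} →↑ u_{n+1}. -/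
/-- The upward-closure step relation on `a`-focused cache states. -/
inductive UpStep {A : Type*} : Option (Finset A) → Option (Finset A) → Prop
  | bot (x : Option (Finset A)) : UpStep x none
  | sup (x y : Finset A) (h : x ⊆ y) : UpStep (some x) (some y)

private lemma upStep_refl {A : Type*} (x : Option (Finset A)) : UpStep x x := by
  cases x with
  | none => exact UpStep.bot _
  | some s => exact UpStep.sup s s (Finset.Subset.refl s)

private lemma upStep_trans {A : Type*} {x y z : Option (Finset A)}
    (h1 : UpStep x y) (h2 : UpStep y z) : UpStep x z := by
  cases h2 with
  | bot => exact UpStep.bot _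
  | sup y z h =>
    cases h1 with
    | sup x y h' => exact UpStep.sup _ _ (h'.trans h)

private lemma fstep_card {A : Type*} [DecidableEq A] {N : ℕ} {b : A}
    {p q : Option (Finset A)} (h : FStep N b p q) :
    ∀ s, q = some s → s.card < N := by
  cases h with
  | miss => intro s hs; simp at hs
  | hit x hx => intro s hs; simp at hs; subst hs; simpa using hx
  | evict => intro s hs; simp at hs

/-- Commutation: an upstep followed by an FStep can be replaced by an FStep followed
by an upstep, provided the source satisfies the cardinality invariant. -/
private lemma upFComm {A : Type*} [DecidableEq A] {N : ℕ} {b : A}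
    {x y z : Option (Finset A)} (hxy : UpStep x y) (hyz : FStep N b y z)
    (hx : ∀ s, x = some s → s.card < N ∨ y = x) :
    ∃ z', FStep N b x z' ∧ UpStep z' z := by
  cases hxy with
  | bot x =>
    cases hyz
    cases x with
    | none => exact ⟨none, FStep.miss, UpStep.bot _⟩
    | some s =>
      rcases hx s rfl with hcard | hxy
      · have hle : (s ∪ {b}).card ≤ N := by
          calc (s ∪ {b}).card ≤ s.card + ({b} : Finset A).card := Finset.card_union_le _ _
            _ = s.card + 1 := by simp
            _ ≤ N := by omega
        rcases lt_or_eq_of_le hle with h | h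
        · exact ⟨some (s ∪ {b}), FStep.hit s h, UpStep.bot _⟩
        · exact ⟨none, FStep.evict s h, UpStep.bot _⟩
      · simp at hxy
  | sup x y hsub =>
    cases hyz with
    | hit y hy =>
      have hsub' : x ∪ {b} ⊆ y ∪ {b} := Finset.union_subset_union hsub (le_refl _)
      have hcard : (x ∪ {b}).card < N := lt_of_le_of_lt (Finset.card_le_card hsub') hy
      exact ⟨some (x ∪ {b}), FStep.hit x hcard, UpStep.sup _ _ hsub'⟩
    | evict y hy =>
      have hsub' : x ∪ {b} ⊆ y ∪ {b} := Finset.union_subset_union hsub (le_refl _)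
      have hle : (x ∪ {b}).card ≤ N := hy ▸ Finset.card_le_card hsub'
      rcases lt_or_eq_of_le hle with h | h
      · exact ⟨some (x ∪ {b}), FStep.hit x h, UpStep.bot _⟩
      · exact ⟨none, FStep.evict x h, UpStep.bot _⟩

private lemma aux {A : Type*} [DecidableEq A] (N : ℕ) (n : ℕ) (b : ℕ → A)
    (u v : ℕ → Option (Finset A))
    (hall : ∀ i ≤ n, FStep N (b i) (u i) (v i) ∧ UpStep (v i) (u (i + 1))) :
    ∃ u' : ℕ → Option (Finset A),
      FStep N (b 0) (u 0) (u' 1) ∧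
      (∀ i, 1 ≤ i → i ≤ n → FStep N (b i) (u' i) (u' (i + 1))) ∧
      UpStep (u' (n + 1)) (u (n + 1)) := by
  induction n with
  | zero =>
    obtain ⟨hf, hu⟩ := hall 0 (le_refl _)
    refine ⟨fun i => if i = 0 then u 0 else v 0, by simpa using hf, ?_, by simpa using hu⟩
    intro i h1 h0; omega
  | succ n ih =>
    obtain ⟨u', hf0, hsteps, hup⟩ := ih (fun i hi => hall i (by omega))
    obtain ⟨hfn, hun⟩ := hall (n + 1) (le_refl _)
    -- u' (n+1) is an FStep output, hence satisfies the invariant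
    have hinv : ∀ s, u' (n + 1) = some s → s.card < N ∨ u (n + 1) = u' (n + 1) := by
      intro s hs
      left
      rcases Nat.eq_zero_or_pos n with rfl | hn
      · exact fstep_card hf0 s hs
      · exact fstep_card (hsteps n hn (le_refl _)) s hs
    obtain ⟨z', hz1, hz2⟩ := upFComm hup hfn hinv
    refine ⟨fun i => if i = n + 2 then z' else u' i, ?_, ?_, ?_⟩
    · simpa using hf0
    · intro i h1 h2
      rcases Nat.lt_or_ge i (n + 1) with h | h
      · have e1 : i ≠ n + 2 := by omega
        have e2 : i + 1 ≠ n + 2 := by omega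
        simp only [e1, e2, if_neg, if_false]
        exact hsteps i h1 (by omega)
      · have : i = n + 1 := by omega
        subst this
        have e1 : n + 1 ≠ n + 2 := by omega
        simp only [e1, if_neg, if_false, if_pos rfl]
        exact hz1
    · simpa using upStep_trans hz2 hun

/-- Interleaving upward-closure steps with focused transitions is equivalent to
performing all focused transitions first and a single upward-closure step at the end. -/
theorem upStep_interleave_iff {A : Type*} [DecidableEq A] (a : A) (N : ℕ) (hN : 1 ≤ N)
    (n : ℕ) (b : ℕ → A) (hb : ∀ i ≤ n, b i ≠ a)
    (u0 ufin : Option (Finset A)) :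
    (∃ u v : ℕ → Option (Finset A),
        u 0 = u0 ∧ u (n + 1) = ufin ∧
        ∀ i ≤ n, FStep N (b i) (u i) (v i) ∧ UpStep (v i) (u (i + 1))) ↔
    (∃ u' : ℕ → Option (Finset A),
        FStep N (b 0) u0 (u' 1) ∧
        (∀ i, 1 ≤ i → i ≤ n → FStep N (b i) (u' i) (u' (i + 1))) ∧
        UpStep (u' (n + 1)) ufin) := by
  constructor
  · rintro ⟨u, v, h0, hfin, hall⟩
    obtain ⟨u', hf0, hsteps, hup⟩ := aux N n b u v hall
    exact ⟨u', h0 ▸ hf0, hsteps, hfin ▸ hup⟩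
  · rintro ⟨u', h1, h2, h3⟩
    refine ⟨fun i => if i = 0 then u0 else if i = n + 1 then ufin else u' i,
      fun i => u' (i + 1), by simp, ?_, ?_⟩
    · simp
    · intro i hi
      constructor
      · rcases Nat.eq_zero_or_pos i with rfl | hpos
        · simpa using h1
        · have e0 : i ≠ 0 := by omega
          have e1 : i ≠ n + 1 := by omega
          simp only [e0, e1, if_neg, if_false]
          exact h2 i hpos hi
      · rcases Nat.lt_or_ge i n with h | h
        · have e0 : i + 1 ≠ 0 := by omega
          have e1 : i + 1 ≠ n + 1 := by omega
          simp only [e0, e1, if_neg, if_false]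
          exact upStep_refl _
        · have : i = n := by omega
          subst this
          simpa using h3
end

section
/- Fix an associativity N ≥ 1 and a type A of memory-block addresses with decidable equality. For every block a : A and all lists t1, t2 : List A with a ∉ t2, the block a is contained in the LRU cache state obtained by executing the trace t1 ++ (a :: t2) from the empty cache if and only if the number of distinct addresses occurring in t2 is at most N − 1. Moreover, if a does not occur in a trace t at all, then a is not contained in the LRU cache state obtained by executing t from the empty cache. -/
/-- An LRU cache of associativity `N` is a list of pairwise distinct addresses,
youngest first. Accessing block `b` rejuvenates `b` (or loads it) and keeps
only the `N` youngest blocks. -/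
def lruAccess {A : Type*} [DecidableEq A] (N : ℕ) (s : List A) (b : A) : List A :=
  ((b :: s.erase b).take N)

/-- The LRU cache state of associativity `N` obtained by executing trace `t`
from the empty cache. -/
def lruRun {A : Type*} [DecidableEq A] (N : ℕ) (t : List A) : List A :=
  t.foldl (lruAccess N) []


lemma lruRun_concat {A : Type*} [DecidableEq A] (N : ℕ) (t : List A) (b : A) :
    lruRun N (t ++ [b]) = lruAccess N (lruRun N t) b := by
  simp [lruRun, List.foldl_append]

lemma not_mem_lruRun {A : Type*} [DecidableEq A] (N : ℕ) (a : A) (t : List A)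
    (ht : a ∉ t) : a ∉ lruRun N t := by
  induction t using List.reverseRecOn with
  | nil => simp [lruRun]
  | append_singleton t b ih =>
    simp only [List.mem_append, List.mem_singleton, not_or] at ht
    rw [lruRun_concat]
    intro h
    rcases List.mem_cons.mp (List.take_subset _ _ h) with h' | h'
    · exact ht.2 h'
    · exact ih ht.1 (List.mem_of_mem_erase h')

lemma take_middle {A : Type*} (u v : List A) (a : A) (N : ℕ) (h : u.length + 1 ≤ N) :
    (u ++ a :: v).take N = u ++ a :: v.take (N - u.length - 1) := by
  rw [List.take_append, List.take_of_length_le (by omega)]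
  congr 1
  obtain ⟨M, hM⟩ : ∃ M, N - u.length = M + 1 := ⟨N - u.length - 1, by omega⟩
  rw [hM, List.take_succ_cons]
  have : M = N - u.length - 1 := by omega
  rw [this]
  norm_num

lemma lru_key {A : Type*} [DecidableEq A] (N : ℕ) (hN : 1 ≤ N) (a : A) (t1 : List A) :
    ∀ t2 : List A, a ∉ t2 →
      (t2.toFinset.card + 1 ≤ N →
        ∃ u v, lruRun N (t1 ++ a :: t2) = u ++ a :: v ∧ u.Nodup ∧
          u.toFinset = t2.toFinset ∧ u.length + 1 ≤ N) ∧
      (N < t2.toFinset.card + 1 → a ∉ lruRun N (t1 ++ a :: t2)) := by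
  intro t2
  induction t2 using List.reverseRecOn with
  | nil =>
    intro _
    constructor
    · intro _
      have : t1 ++ [a] = t1 ++ a :: [] := by simp
      refine ⟨[], ((lruRun N t1).erase a).take (N - 1), ?_, by simp, by simp, by simpa using hN⟩
      rw [← this, lruRun_concat, lruAccess]
      obtain ⟨M, rfl⟩ : ∃ M, N = M + 1 := ⟨N - 1, by omega⟩
      simp [List.take_succ_cons]
    · intro h; simp at h; omega
  | append_singleton t2 b ih =>
    intro ha
    simp only [List.mem_append, List.mem_singleton, not_or] at ha
    obtain ⟨ha2, hab⟩ := ha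
    have hre : t1 ++ a :: (t2 ++ [b]) = (t1 ++ a :: t2) ++ [b] := by simp
    rw [hre, lruRun_concat]
    set s := lruRun N (t1 ++ a :: t2) with hs
    have hcard : (t2 ++ [b]).toFinset = insert b t2.toFinset := by
      simp [List.toFinset_append]
    by_cases h1 : t2.toFinset.card + 1 ≤ N
    · obtain ⟨u, v, hsuv, hund, hufs, hulen⟩ := (ih ha2).1 h1
      have hlenu : u.length = t2.toFinset.card := by
        rw [← hufs]; exact (List.toFinset_card_of_nodup hund).symm
      have hau : a ∉ u := by
        intro h
        exact ha2 (List.mem_toFinset.mp (hufs ▸ List.mem_toFinset.mpr h))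
      by_cases hb : b ∈ u
      · -- b already among blocks since last access of a
        have hbt2 : b ∈ t2.toFinset := hufs ▸ List.mem_toFinset.mpr hb
        have hc' : (t2 ++ [b]).toFinset.card = t2.toFinset.card := by
          rw [hcard, Finset.insert_eq_self.mpr hbt2]
        have hbu1 : 1 ≤ u.length := by cases u with | nil => simp at hb | cons => simp
        have herase : s.erase b = u.erase b ++ a :: v := by
          rw [hsuv, List.erase_append_left _ hb]
        have hlen' : (b :: u.erase b).length = u.length := by
          simp [List.length_erase_of_mem hb]; omega
        have hstate : lruAccess N s b
            = (b :: u.erase b) ++ a :: v.take (N - (b :: u.erase b).length - 1) := by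
          rw [lruAccess, herase, ← List.cons_append, take_middle]
          rw [hlen']; omega
        have hbne : b ∉ u.erase b := fun h => absurd ((hund.mem_erase_iff).mp h).1 (by simp)
        constructor
        · intro _
          refine ⟨b :: u.erase b, _, hstate, List.nodup_cons.mpr ⟨hbne, hund.erase b⟩, ?_, ?_⟩
          · have he : (u.erase b).toFinset = u.toFinset.erase b := by
              ext x
              simp [hund.mem_erase_iff, Finset.mem_erase]
            rw [List.toFinset_cons, he, Finset.insert_erase (List.mem_toFinset.mpr hb),
              hufs, hcard, Finset.insert_eq_self.mpr hbt2]
          · rw [hlen']; omega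
        · intro h2
          rw [hc'] at h2; omega
      · -- b is a new block since the last access of a
        have hbt2 : b ∉ t2.toFinset := fun h =>
          hb (List.mem_toFinset.mp (hufs ▸ h))
        have hc' : (t2 ++ [b]).toFinset.card = t2.toFinset.card + 1 := by
          rw [hcard, Finset.card_insert_of_notMem hbt2]
        have herase : s.erase b = u ++ a :: v.erase b := by
          rw [hsuv, List.erase_append_right _ hb, List.erase_cons_tail]
          exact by simpa using hab
        constructor
        · intro h2
          rw [hc'] at h2
          refine ⟨b :: u, (v.erase b).take (N - (b :: u).length - 1), ?_,
            List.nodup_cons.mpr ⟨hb, hund⟩, ?_, ?_⟩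
          · rw [lruAccess, herase, ← List.cons_append, take_middle]
            simp; omega
          · rw [hcard]; simp [hufs]
          · simp; omega
        · intro h2
          rw [hc'] at h2
          have hNlen : N = u.length + 1 := by omega
          have : lruAccess N s b = b :: u := by
            rw [lruAccess, herase, ← List.cons_append,
              List.take_append,
              List.take_of_length_le (by simp [hNlen])]
            simp [hNlen]
          rw [this]
          simp [hab, hau]
    · have hnot := (ih ha2).2 (by omega)
      constructor
      · intro h2
        exfalso
        have hle : t2.toFinset.card ≤ (t2 ++ [b]).toFinset.card := by
          apply Finset.card_le_card
          rw [hcard]; exact Finset.subset_insert _ _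
        omega
      · intro _ hmem
        rcases List.mem_cons.mp (List.take_subset _ _ hmem) with h' | h'
        · exact hab h'
        · exact hnot (List.mem_of_mem_erase h')

/-- An access to `a` after trace `t1 ++ a :: t2` (with no later access to `a`) is a
hit iff at most `N - 1` distinct blocks were accessed since the last access to `a`;
and a block that is never accessed is not in the cache. -/
theorem lru_hit_iff {A : Type*} [DecidableEq A] (N : ℕ) (hN : 1 ≤ N) :
    (∀ (a : A) (t1 t2 : List A), a ∉ t2 →
        (a ∈ lruRun N (t1 ++ a :: t2) ↔ t2.toFinset.card ≤ N - 1)) ∧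
    (∀ (a : A) (t : List A), a ∉ t → a ∉ lruRun N t) := by
  refine ⟨fun a t1 t2 ha => ⟨fun hmem => ?_, fun hc => ?_⟩, fun a t => not_mem_lruRun N a t⟩
  · by_contra hc
    exact ((lru_key N hN a t1 t2 ha).2 (by omega)) hmem
  · obtain ⟨u, v, hsuv, -, -, -⟩ := (lru_key N hN a t1 t2 ha).1 (by omega)
    rw [hsuv]
    simp
end

section
/- Fix an associativity N ≥ 1, a type A of memory-block addresses with decidable equality, and a distinguished block a : A. Let s : List A be a valid LRU cache state (pairwise distinct entries, length at most N). Then for every block b ≠ a, the a-focused abstraction of the state obtained by accessing b in s, namely focus_a((b :: s.erase b).take N), equals the result of the a-focused transition applied to focus_a(s): it is none if focus_a(s) = none; it is some (x ∪ {b}) if focus_a(s) = some x and |x ∪ {b}| < N; and it is none if focus_a(s) = some x and |x ∪ {b}| = N. -/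
/-- The `a`-focused abstraction of a concrete LRU cache state: `some` of the set
of blocks younger than `a` if `a` is in the cache, `none` (𝒜) otherwise. -/
def lruFocus {A : Type*} [DecidableEq A] (a : A) (s : List A) : Option (Finset A) :=
  if a ∈ s then some (s.takeWhile (fun x => decide (x ≠ a))).toFinset else none

private lemma takeWhile_ne_append {A : Type*} [DecidableEq A] (a : A) (p q : List A)
    (h : ∀ x ∈ p, x ≠ a) :
    (p ++ a :: q).takeWhile (fun x => decide (x ≠ a)) = p := by
  induction p with
  | nil => simp [List.takeWhile_cons]
  | cons c cs ih =>
    have hc : c ≠ a := h c (by simp)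
    rw [List.cons_append, List.takeWhile_cons, if_pos (by simp [hc]),
      ih (fun x hx => h x (by simp [hx]))]

private lemma exists_decomp {A : Type*} [DecidableEq A] {a : A} {s : List A} (ha : a ∈ s) :
    ∃ u v, s = u ++ a :: v ∧ ∀ x ∈ u, x ≠ a := by
  induction s with
  | nil => cases ha
  | cons c cs ih =>
    by_cases hc : c = a
    · exact ⟨[], cs, by simp [hc], by simp⟩
    · obtain ⟨u, v, h1, h2⟩ := ih (by
        rcases List.mem_cons.mp ha with h | h
        · exact absurd h.symm hc
        · exact h)
      refine ⟨c :: u, v, by simp [h1], ?_⟩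
      intro x hx
      rcases List.mem_cons.mp hx with rfl | hx
      · exact hc
      · exact h2 x hx

/-- The `a`-focused abstraction commutes with an access to a block `b ≠ a`:
the abstraction of the updated state is given by the `a`-focused transition. -/
theorem lruFocus_access_ne {A : Type*} [DecidableEq A] (N : ℕ) (hN : 1 ≤ N) (a : A)
    (s : List A) (hnd : s.Nodup) (hlen : s.length ≤ N)
    (b : A) (hb : b ≠ a) :
    (lruFocus a s = none → lruFocus a (lruAccess N s b) = none) ∧
    (∀ x : Finset A, lruFocus a s = some x → (x ∪ {b}).card < N →
        lruFocus a (lruAccess N s b) = some (x ∪ {b})) ∧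
    (∀ x : Finset A, lruFocus a s = some x → (x ∪ {b}).card = N →
        lruFocus a (lruAccess N s b) = none) := by
  by_cases ha : a ∈ s
  · obtain ⟨u, v, rfl, hu⟩ := exists_decomp ha
    have hund : u.Nodup := (List.nodup_append.mp hnd).1
    have hfs : lruFocus a (u ++ a :: v) = some u.toFinset := by
      rw [lruFocus, if_pos ha, takeWhile_ne_append a u v hu]
    obtain ⟨w, v', hw1, hw2, hw3, hw4, hw5⟩ :
        ∃ w v', (u ++ a :: v).erase b = w ++ a :: v' ∧ (∀ x ∈ w, x ≠ a) ∧ b ∉ w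
          ∧ w.Nodup ∧ insert b w.toFinset = insert b u.toFinset := by
      by_cases hbu : b ∈ u
      · refine ⟨u.erase b, v, ?_, ?_, hund.not_mem_erase, hund.erase b, ?_⟩
        · rw [List.erase_append]; simp [hbu]
        · intro x hx; exact hu x (List.mem_of_mem_erase hx)
        · ext y
          simp only [Finset.mem_insert, List.mem_toFinset, hund.mem_erase_iff]
          by_cases hyb : y = b <;> simp [hyb]
      · refine ⟨u, v.erase b, ?_, hu, hbu, hund, rfl⟩
        rw [List.erase_append]
        simp [hbu, List.erase_cons, (Ne.symm hb)]
    have hbwnd : (b :: w).Nodup := List.nodup_cons.mpr ⟨hw3, hw4⟩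
    have hbwne : ∀ x ∈ b :: w, x ≠ a := by
      intro x hx
      rcases List.mem_cons.mp hx with rfl | hx
      · exact hb
      · exact hw2 x hx
    have hcard : (u.toFinset ∪ {b}).card = (b :: w).length := by
      rw [Finset.union_comm, ← Finset.insert_eq, ← hw5,
        show insert b w.toFinset = (b :: w).toFinset by simp]
      exact List.toFinset_card_of_nodup hbwnd
    have hacc : lruAccess N (u ++ a :: v) b = ((b :: w) ++ a :: v').take N := by
      simp [lruAccess, hw1]
    have hfin : ((b :: w).toFinset : Finset A) = u.toFinset ∪ {b} := by
      rw [Finset.union_comm, ← Finset.insert_eq, ← hw5]; simp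
    constructor
    · intro h; rw [hfs] at h; cases h
    refine ⟨?_, ?_⟩
    · intro x hx hcd
      rw [hfs] at hx
      obtain rfl : u.toFinset = x := by injection hx
      have hlt : (b :: w).length < N := by rw [← hcard]; exact hcd
      obtain ⟨m, hm⟩ : ∃ m, N - (b :: w).length = m + 1 := by
        refine ⟨N - (b :: w).length - 1, ?_⟩
        omega
      rw [hacc, List.take_append,
        List.take_of_length_le (le_of_lt hlt), hm, List.take_cons (Nat.succ_pos m)]
      rw [lruFocus, if_pos (by simp), takeWhile_ne_append a (b :: w) _ hbwne, hfin]
    · intro x hx hcd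
      rw [hfs] at hx
      obtain rfl : u.toFinset = x := by injection hx
      have hge : N ≤ (b :: w).length := by rw [← hcard]; omega
      have : ((b :: w) ++ a :: v').take N = (b :: w).take N := by
        rw [List.take_append, Nat.sub_eq_zero_of_le hge]
        simp
      rw [hacc, this, lruFocus, if_neg]
      intro hmem
      exact hbwne a (List.mem_of_mem_take hmem) rfl
  · have h1 : lruFocus a s = none := by simp [lruFocus, ha]
    have h2 : lruFocus a (lruAccess N s b) = none := by
      rw [lruFocus, if_neg]
      intro hmem
      have := List.mem_of_mem_take hmem
      rcases List.mem_cons.mp this with h | h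
      · exact hb h.symm
      · exact ha (List.mem_of_mem_erase h)
    refine ⟨fun _ => h2, fun x hx _ => ?_, fun x hx _ => ?_⟩ <;>
      (rw [h1] at hx; cases hx)
end

section
/- Let V be a finite type with |V| = n ≥ 1, let E be a relation on V (a directed graph), and let v0 : V. Consider LRU caches of associativity n over the address type Option V, where none is a fresh block w and some v represents the vertex v. Then the graph has a Hamiltonian circuit through v0 if and only if there exists a sequence w_0 = v0, w_1, …, w_n = v0 in V with E w_i w_{i+1} for all i < n such that, executing from the empty cache the trace consisting of an access to the block w followed by accesses to the blocks w_1, …, w_n (as elements some w_i of Option V), the block w is not contained in the resulting LRU cache state (i.e., the next access to w would be a miss). -/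
section aux
variable {A : Type*} [DecidableEq A]

/-- Deduplication keeping the first occurrence. -/
def rdedup : List A → List A
  | [] => []
  | a :: l => a :: (rdedup l).erase a

lemma rdedup_nodup : ∀ (l : List A), (rdedup l).Nodup
  | [] => List.nodup_nil
  | a :: l => by
      simp only [rdedup, List.nodup_cons]
      exact ⟨(rdedup_nodup l).not_mem_erase, (rdedup_nodup l).erase a⟩

lemma mem_rdedup {a : A} : ∀ {l : List A}, a ∈ rdedup l ↔ a ∈ l
  | [] => Iff.rfl
  | b :: l => by
      simp only [rdedup, List.mem_cons, (rdedup_nodup l).mem_erase_iff, mem_rdedup]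
      by_cases h : a = b <;> simp [h]

lemma take_erase_take (b : A) : ∀ (l : List A) (N : ℕ),
    ((l.take (N + 1)).erase b).take N = (l.erase b).take N
  | [], N => rfl
  | a :: l, N => by
      by_cases h : b = a
      · subst h
        simp [List.take_cons, List.erase_cons_head, List.take_take]
      · have ha : (a == b) = false := by
          simp [beq_eq_false_iff_ne]; exact fun hh => h hh.symm
        simp only [List.take_succ_cons, List.erase_cons, ha, Bool.false_eq_true,
          if_false]
        cases N with
        | zero => simp
        | succ M =>
            rw [List.take_succ_cons, List.take_succ_cons, take_erase_take b l M]

lemma foldl_lru (N : ℕ) (hN : 1 ≤ N) (x : A) (l : List A) (hx : x ∉ l) :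
    List.foldl (lruAccess N) [x] l = ((rdedup l.reverse) ++ [x]).take N := by
  induction l using List.reverseRecOn with
  | nil =>
      obtain ⟨M, rfl⟩ : ∃ M, N = M + 1 := ⟨N - 1, by omega⟩
      simp [rdedup]
  | append_singleton l b ih =>
      have hx' : x ∉ l := fun h => hx (List.mem_append_left _ h)
      have hbx : b ≠ x := by
        rintro rfl; exact hx (List.mem_append_right _ (List.mem_singleton_self _))
      rw [List.foldl_append, ih hx']
      simp only [List.foldl_cons, List.foldl_nil, List.reverse_append,
        List.reverse_singleton, List.singleton_append]
      show lruAccess N ((rdedup l.reverse ++ [x]).take N) b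
        = (rdedup (b :: l.reverse) ++ [x]).take N
      set D := rdedup l.reverse with hD
      have hDx : (D ++ [x]).erase b = D.erase b ++ [x] := by
        rw [List.erase_append]
        by_cases hb : b ∈ D
        · simp [hb]
        · simp [hb, List.erase_of_not_mem hb,
            List.erase_of_not_mem (by simp [Ne.symm, hbx] : b ∉ [x])]
      obtain ⟨M, rfl⟩ : ∃ M, N = M + 1 := ⟨N - 1, by omega⟩
      show ((b :: ((D ++ [x]).take (M+1)).erase b)).take (M+1)
        = ((b :: D.erase b) ++ [x]).take (M+1)
      rw [List.cons_append, List.take_succ_cons, List.take_succ_cons,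
        take_erase_take, hDx]

end aux

section missiff
variable {V : Type*} [Fintype V] [DecidableEq V]

lemma nodup_iff_card (l : List V) :
    l.Nodup ↔ l.toFinset.card = l.length := by
  constructor
  · exact List.toFinset_card_of_nodup
  · intro h
    have hfs : l.toFinset = l.dedup.toFinset := by
      ext a; simp [List.mem_dedup]
    have h1 : l.toFinset.card = l.dedup.length := by
      rw [hfs, List.toFinset_card_of_nodup l.nodup_dedup]
    have h2 : l.dedup = l := (List.dedup_sublist l).eq_of_length (by omega)
    rw [← h2]; exact l.nodup_dedup

lemma miss_iff (n : ℕ) (hn : 1 ≤ n) (hV : Fintype.card V = n)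
    (lV : List V) (hlen : lV.length = n) :
    ((none : Option V) ∉ lruRun n (none :: lV.map some)) ↔ lV.Nodup := by
  have hnone : (none : Option V) ∉ lV.map some := by simp
  have hrun : lruRun n (none :: lV.map some)
      = ((rdedup (lV.map some).reverse) ++ [none]).take n := by
    have h0 : lruAccess n ([] : List (Option V)) none = [none] := by
      obtain ⟨M, rfl⟩ : ∃ M, n = M + 1 := ⟨n - 1, by omega⟩
      simp [lruAccess]
    rw [lruRun, List.foldl_cons, h0]
    exact foldl_lru n hn none _ hnone
  set D := rdedup (lV.map some).reverse with hD
  have hDnodup : D.Nodup := rdedup_nodup _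
  have hDmem : ∀ a, a ∈ D ↔ a ∈ lV.map some := by
    intro a; rw [hD, mem_rdedup, List.mem_reverse]
  have hDnone : (none : Option V) ∉ D := fun h => hnone ((hDmem _).mp h)
  have hDfin : D.toFinset = (lV.map some).toFinset := by
    ext a; simp only [List.mem_toFinset]; exact hDmem a
  have hDlen : D.length = (lV.map some).toFinset.card := by
    rw [← hDfin, List.toFinset_card_of_nodup hDnodup]
  have hcardle : (lV.map some).toFinset.card ≤ n := by
    have hsub : (lV.map some).toFinset ⊆ Finset.univ.erase none := by
      intro a ha
      rw [List.mem_toFinset] at ha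
      refine Finset.mem_erase.mpr ⟨?_, Finset.mem_univ _⟩
      rintro rfl; exact hnone ha
    calc (lV.map some).toFinset.card ≤ (Finset.univ.erase (none : Option V)).card :=
          Finset.card_le_card hsub
      _ = Fintype.card (Option V) - 1 := by
          rw [Finset.card_erase_of_mem (Finset.mem_univ _), Finset.card_univ]
      _ = n := by rw [Fintype.card_option, hV]; omega
  have hmemiff : (none : Option V) ∈ (D ++ [none]).take n ↔ D.length < n := by
    constructor
    · intro h
      by_contra hge
      have heq : D.length = n := by omega
      rw [← heq, List.take_left] at h
      exact hDnone h
    · intro h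
      rw [List.take_of_length_le (by simp; omega)]
      simp
  rw [hrun]
  rw [hmemiff, not_lt]
  have hDn : n ≤ D.length ↔ D.length = n := by
    constructor
    · intro h; omega
    · intro h; omega
  rw [hDn, hDlen]
  have h1 : lV.Nodup ↔ (lV.map some).Nodup :=
    (List.nodup_map_iff (Option.some_injective V)).symm
  rw [h1, nodup_iff_card, List.length_map, hlen]

end missiff

/-- NP-hardness reduction for the may-miss problem: a directed graph `E` on `n ≥ 1`
vertices has a Hamiltonian circuit through `v0` iff there is a closed walk
`v0 = w 0, w 1, …, w n = v0` along `E`-edges such that, in an LRU cache of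
associativity `n` over `Option V` (with `none` the fresh block `w`), after
accessing `w` and then the blocks `w 1, …, w n`, the block `w` has been evicted. -/
theorem hamiltonian_iff_may_miss (V : Type*) [Fintype V] [DecidableEq V]
    (n : ℕ) (hV : Fintype.card V = n) (hn : 1 ≤ n)
    (E : V → V → Prop) (v0 : V) :
    (∃ σ : Fin n ≃ V,
        σ ⟨0, by omega⟩ = v0 ∧
        (∀ i : ℕ, ∀ h : i + 1 < n, E (σ ⟨i, by omega⟩) (σ ⟨i + 1, h⟩)) ∧
        E (σ ⟨n - 1, by omega⟩) (σ ⟨0, by omega⟩)) ↔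
    (∃ w : ℕ → V, w 0 = v0 ∧ w n = v0 ∧ (∀ i < n, E (w i) (w (i + 1))) ∧
        (none : Option V) ∉
          lruRun n ((none : Option V) ::
            (List.range n).map (fun i => some (w (i + 1))))) := by
  have hn0 : 0 < n := hn
  constructor
  · rintro ⟨σ, hσ0, hσe, hσl⟩
    refine ⟨fun i => σ ⟨i % n, Nat.mod_lt i hn0⟩, ?_, ?_, ?_, ?_⟩
    · convert hσ0 using 2
      exact Fin.ext (Nat.zero_mod n)
    · show σ ⟨n % n, Nat.mod_lt n hn0⟩ = v0
      rw [← hσ0]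
      congr 1
      exact Fin.ext (Nat.mod_self n)
    · intro i hi
      rcases Nat.lt_or_ge (i + 1) n with h1 | h1
      · have e1 : i % n = i := Nat.mod_eq_of_lt hi
        have e2 : (i + 1) % n = i + 1 := Nat.mod_eq_of_lt h1
        have := hσe i h1
        convert this using 3
      · have hin : i = n - 1 := by omega
        have e1 : i % n = n - 1 := by rw [hin]; exact Nat.mod_eq_of_lt (by omega)
        have e2 : (i + 1) % n = 0 := by
          have : i + 1 = n := by omega
          rw [this, Nat.mod_self]
        convert hσl using 3
    · set w : ℕ → V := fun i => σ ⟨i % n, Nat.mod_lt i hn0⟩ with hw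
      set lV : List V := (List.range n).map (fun i => w (i + 1)) with hlV
      have htr : (List.range n).map (fun i => some (w (i + 1))) = lV.map some := by
        simp [hlV, List.map_map, Function.comp]
      rw [htr]
      rw [miss_iff n hn hV lV (by simp [hlV])]
      refine List.Nodup.map_on ?_ List.nodup_range
      intro x hx y hy hxy
      rw [List.mem_range] at hx hy
      have hmod : ((x+1) % n : ℕ) = (y+1) % n := by
        have := σ.injective hxy
        exact congrArg Fin.val this
      rcases Nat.lt_or_ge (x + 1) n with h1 | h1 <;>
        rcases Nat.lt_or_ge (y + 1) n with h2 | h2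
      · rw [Nat.mod_eq_of_lt h1, Nat.mod_eq_of_lt h2] at hmod; omega
      · have : y + 1 = n := by omega
        rw [Nat.mod_eq_of_lt h1, this, Nat.mod_self] at hmod; omega
      · have : x + 1 = n := by omega
        rw [this, Nat.mod_self, Nat.mod_eq_of_lt h2] at hmod; omega
      · omega
  · rintro ⟨w, hw0, hwn, hwe, hmiss⟩
    set lV : List V := (List.range n).map (fun i => w (i + 1)) with hlV
    have htr : (List.range n).map (fun i => some (w (i + 1))) = lV.map some := by
      simp [hlV, List.map_map, Function.comp]
    rw [htr, miss_iff n hn hV lV (by simp [hlV])] at hmiss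
    have hinj2 : ∀ a b : ℕ, a < n → b < n → w (a + 1) = w (b + 1) → a = b := by
      intro a b ha hb hab
      exact List.inj_on_of_nodup_map (hlV ▸ hmiss) (List.mem_range.mpr ha)
        (List.mem_range.mpr hb) hab
    have hinj : Function.Injective (fun i : Fin n => w i) := by
      intro i j hij
      simp only at hij
      rcases Nat.eq_zero_or_pos i.val with hi0 | hi1 <;>
        rcases Nat.eq_zero_or_pos j.val with hj0 | hj1
      · exact Fin.ext (by omega)
      · exfalso
        have h1 : w ((n - 1) + 1) = w ((j.val - 1) + 1) := by
          rw [show (n-1)+1 = n from by omega, show (j.val-1)+1 = j.val from by omega]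
          rw [hwn, ← hw0, ← hi0]; exact hij
        have := hinj2 (n-1) (j.val-1) (by omega) (by omega) h1
        omega
      · exfalso
        have h1 : w ((i.val - 1) + 1) = w ((n - 1) + 1) := by
          rw [show (n-1)+1 = n from by omega, show (i.val-1)+1 = i.val from by omega]
          rw [hwn, ← hw0, ← hj0]; exact hij
        have := hinj2 (i.val-1) (n-1) (by omega) (by omega) h1
        omega
      · have h1 : w ((i.val - 1) + 1) = w ((j.val - 1) + 1) := by
          rw [show (i.val-1)+1 = i.val from by omega,
            show (j.val-1)+1 = j.val from by omega]
          exact hij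
        have := hinj2 (i.val-1) (j.val-1) (by omega) (by omega) h1
        exact Fin.ext (by omega)
    have hbij : Function.Bijective (fun i : Fin n => w i) :=
      (Fintype.bijective_iff_injective_and_card _).mpr ⟨hinj, by simp [hV]⟩
    refine ⟨Equiv.ofBijective _ hbij, ?_, ?_, ?_⟩
    · show w 0 = v0; exact hw0
    · intro i h
      show E (w i) (w (i + 1))
      exact hwe i (by omega)
    · show E (w (n - 1)) (w 0)
      have := hwe (n - 1) (by omega)
      rw [show (n-1)+1 = n from by omega, hwn, ← hw0] at this
      exact this
end
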